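/- The number of crossings is equidistributed over 132-avoiding and 213-avoiding permutations: for every n ≥ 1, ∑_{σ∈S_n(132)} q^{crs(σ)} = ∑_{σ∈S_n(213)} q^{crs(σ)}. -/

import Mathlib

open Finset Polynomial Equiv

attribute [local instance] Classical.propDecidable

def isCrossing {n : ℕ} (σ : Equiv.Perm (Fin n)) (i j : Fin n) : Prop :=
  (i < j ∧ j < σ i ∧ σ i < σ j) ∨ (σ i < σ j ∧ σ j ≤ i ∧ i < j)

noncomputable def crs {n : ℕ} (σ : Equiv.Perm (Fin n)) : ℕ :=
  (Finset.univ.filter (fun p : Fin n × Fin n => isCrossing σ p.1 p.2)).card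

def avoids123 {n : ℕ} (σ : Equiv.Perm (Fin n)) : Prop :=
  ¬ ∃ i j k : Fin n, i < j ∧ j < k ∧ σ i < σ j ∧ σ j < σ k

def avoids132 {n : ℕ} (σ : Equiv.Perm (Fin n)) : Prop :=
  ¬ ∃ i j k : Fin n, i < j ∧ j < k ∧ σ i < σ k ∧ σ k < σ j

def avoids213 {n : ℕ} (σ : Equiv.Perm (Fin n)) : Prop :=
  ¬ ∃ i j k : Fin n, i < j ∧ j < k ∧ σ j < σ i ∧ σ i < σ k

def avoids231 {n : ℕ} (σ : Equiv.Perm (Fin n)) : Prop :=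
  ¬ ∃ i j k : Fin n, i < j ∧ j < k ∧ σ k < σ i ∧ σ i < σ j

def avoids312 {n : ℕ} (σ : Equiv.Perm (Fin n)) : Prop :=
  ¬ ∃ i j k : Fin n, i < j ∧ j < k ∧ σ j < σ k ∧ σ k < σ i

def avoids321 {n : ℕ} (σ : Equiv.Perm (Fin n)) : Prop :=
  ¬ ∃ i j k : Fin n, i < j ∧ j < k ∧ σ k < σ j ∧ σ j < σ i

noncomputable def ut {n : ℕ} (σ : Equiv.Perm (Fin n)) : ℕ :=
  (Finset.univ.filter (fun i : Fin n => σ⁻¹ i < i ∧ i < σ i)).card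

noncomputable def lt' {n : ℕ} (σ : Equiv.Perm (Fin n)) : ℕ :=
  (Finset.univ.filter (fun i : Fin n => σ i < i ∧ i < σ⁻¹ i)).card

lemma perm_apply_inv_self {α : Type*} (σ : Equiv.Perm α) (x : α) : σ (σ⁻¹ x) = x :=
  σ.apply_symm_apply x

/-- The key bijection: `Fmap σ = rev ∘ σ⁻¹ ∘ rev` (reverse-complement of the inverse). -/
def Fmap {n : ℕ} (σ : Equiv.Perm (Fin n)) : Equiv.Perm (Fin n) :=
  Fin.revPerm * σ⁻¹ * Fin.revPerm

lemma Fmap_apply {n : ℕ} (σ : Equiv.Perm (Fin n)) (i : Fin n) :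
    Fmap σ i = Fin.rev (σ⁻¹ (Fin.rev i)) := rfl

lemma Fmap_Fmap {n : ℕ} (σ : Equiv.Perm (Fin n)) : Fmap (Fmap σ) = σ := by
  ext x
  simp [Fmap, Fin.rev_rev]

lemma isCrossing_Fmap {n : ℕ} (σ : Equiv.Perm (Fin n)) (i j : Fin n) :
    isCrossing (Fmap σ) i j ↔ isCrossing σ (σ⁻¹ (Fin.rev j)) (σ⁻¹ (Fin.rev i)) := by
  simp only [isCrossing, Fmap_apply, perm_apply_inv_self]
  simp only [Fin.lt_def, Fin.le_def, Fin.val_rev]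
  have h1 := i.isLt
  have h2 := j.isLt
  have h3 := (σ⁻¹ (Fin.rev i)).isLt
  have h4 := (σ⁻¹ (Fin.rev j)).isLt
  omega

lemma crs_Fmap {n : ℕ} (σ : Equiv.Perm (Fin n)) : crs (Fmap σ) = crs σ := by
  unfold crs
  apply Finset.card_bij' (fun p _ => (σ⁻¹ (Fin.rev p.2), σ⁻¹ (Fin.rev p.1)))
    (fun q _ => (Fin.rev (σ q.2), Fin.rev (σ q.1)))
  · intro p hp
    simp only [Finset.mem_filter, Finset.mem_univ, true_and] at hp ⊢
    exact (isCrossing_Fmap σ p.1 p.2).mp hp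
  · intro q hq
    simp only [Finset.mem_filter, Finset.mem_univ, true_and] at hq ⊢
    rw [isCrossing_Fmap]
    simpa [Fin.rev_rev] using hq
  · intro p _
    simp [Fin.rev_rev]
  · intro q _
    simp [Fin.rev_rev]

lemma avoids132_Fmap {n : ℕ} (σ : Equiv.Perm (Fin n)) (h : avoids132 σ) :
    avoids213 (Fmap σ) := by
  rintro ⟨i, j, k, hij, hjk, h1, h2⟩
  simp only [Fmap_apply, Fin.rev_lt_rev] at h1 h2
  exact h ⟨σ⁻¹ (Fin.rev k), σ⁻¹ (Fin.rev i), σ⁻¹ (Fin.rev j), h2, h1, by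
    simp only [perm_apply_inv_self, Fin.rev_lt_rev]; exact hjk, by
    simp only [perm_apply_inv_self, Fin.rev_lt_rev]; exact hij⟩

lemma avoids213_Fmap {n : ℕ} (σ : Equiv.Perm (Fin n)) (h : avoids213 σ) :
    avoids132 (Fmap σ) := by
  rintro ⟨i, j, k, hij, hjk, h1, h2⟩
  simp only [Fmap_apply, Fin.rev_lt_rev] at h1 h2
  exact h ⟨σ⁻¹ (Fin.rev j), σ⁻¹ (Fin.rev k), σ⁻¹ (Fin.rev i), h2, h1, by
    simp only [perm_apply_inv_self, Fin.rev_lt_rev]; exact hjk, by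
    simp only [perm_apply_inv_self, Fin.rev_lt_rev]; exact hij⟩

theorem equidistribution_132_213 (n : ℕ) (hn : 1 ≤ n) :
    ∑ σ ∈ Finset.univ.filter (fun σ : Equiv.Perm (Fin n) => avoids132 σ),
        (Polynomial.X : Polynomial ℤ) ^ crs σ =
      ∑ σ ∈ Finset.univ.filter (fun σ : Equiv.Perm (Fin n) => avoids213 σ),
        (Polynomial.X : Polynomial ℤ) ^ crs σ := by
  apply Finset.sum_nbij' (i := Fmap) (j := Fmap)
  · intro σ hσ
    simp only [Finset.mem_filter, Finset.mem_univ, true_and] at hσ ⊢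
    exact avoids132_Fmap σ hσ
  · intro σ hσ
    simp only [Finset.mem_filter, Finset.mem_univ, true_and] at hσ ⊢
    exact avoids213_Fmap σ hσ
  · intro σ _
    exact Fmap_Fmap σ
  · intro σ _
    exact Fmap_Fmap σ
  · intro σ _
    rw [crs_Fmap]
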